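/- Let A be a measurement with n outcomes and B a measurement with m outcomes on ℂ^d, such that every effect of A and every effect of B is a nonzero orthogonal projection (Hermitian and idempotent). If F(A) = F(B), then A and B are post-processing equivalent: A ⪯ B and B ⪯ A. -/

import Mathlib

open Matrix
open scoped Kronecker ComplexOrder

noncomputable section

/-- A measurement (POVM): a finite family of positive semidefinite matrices summing to `1`. -/
def IsMeasurement {ι κ : Type*} [Fintype ι] [DecidableEq ι] [Fintype κ]
    (A : κ → Matrix ι ι ℂ) : Prop :=
  (∀ x, (A x).PosSemidef) ∧ ∑ x, A x = 1

/-- `A` is a post-processing of `B`: `A ⪯ B`. -/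
def PostProc {ι : Type*} {n m : ℕ}
    (A : Fin n → Matrix ι ι ℂ) (B : Fin m → Matrix ι ι ℂ) : Prop :=
  ∃ μ : Fin n → Fin m → ℝ,
    (∀ x y, 0 ≤ μ x y) ∧ (∀ y, ∑ x, μ x y = 1) ∧
    (∀ x, A x = ∑ y, (μ x y : ℂ) • B y)

/-- The outer product `|E⟩⟨F|` of the vectorizations of two matrices. -/
def outerProd {ι : Type*} (E F : Matrix ι ι ℂ) : Matrix (ι × ι) (ι × ι) ℂ :=
  Matrix.of fun p q => E p.1 p.2 * star (F q.1 q.2)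

/-- The (un-normalized) Fisher information map of a measurement. -/
noncomputable def Fisher {ι κ : Type*} [Fintype ι] [Fintype κ]
    (A : κ → Matrix ι ι ℂ) : Matrix (ι × ι) (ι × ι) ℂ :=
  ∑ x, (Matrix.trace (A x))⁻¹ • outerProd (A x) (A x)

/-- The positive semidefinite square root, with the definition it had in the older Mathlib
(`Matrix.PosSemidef.sqrt`, since removed). -/
noncomputable def Matrix.PosSemidef.sqrt {n 𝕜 : Type*} [Fintype n] [DecidableEq n] [RCLike 𝕜]
    {A : Matrix n n 𝕜} (hA : A.PosSemidef) : Matrix n n 𝕜 :=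
  hA.1.eigenvectorUnitary.1 * diagonal ((↑) ∘ (√·) ∘ hA.1.eigenvalues) *
  (star hA.1.eigenvectorUnitary : Matrix n n 𝕜)

/-- The generalized Fisher information map of a measurement, relative to a
positive definite state `ρ` (with positive semidefinite square root `ρ^{1/2}`). -/
noncomputable def FisherRho {ι κ : Type*} [Fintype ι] [DecidableEq ι] [Fintype κ]
    {ρ : Matrix ι ι ℂ} (hρ : ρ.PosDef) (A : κ → Matrix ι ι ℂ) :
    Matrix (ι × ι) (ι × ι) ℂ :=
  ∑ x, (Matrix.trace (ρ * A x))⁻¹ •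
    outerProd (hρ.posSemidef.sqrt * A x) (hρ.posSemidef.sqrt * A x)

/-- The height of a finite family of self-adjoint matrices: the infimum of the traces of
Hermitian matrices dominating every member in the Loewner order. -/
noncomputable def height {ι κ : Type*} [Fintype ι] [Fintype κ]
    (X : κ → Matrix ι ι ℂ) : ℝ :=
  sInf { t : ℝ | ∃ H : Matrix ι ι ℂ, H.IsHermitian ∧
    (∀ i, (H - X i).PosSemidef) ∧ t = (Matrix.trace H).re }

namespace Stmt11Aux

open scoped ComplexOrder

variable {ι : Type*} [Fintype ι] [DecidableEq ι]

lemma psd_eq_zero_of_neg {M : Matrix ι ι ℂ} (h1 : M.PosSemidef)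
    (h2 : (-M).PosSemidef) : M = 0 := by
  have hv : ∀ v, M *ᵥ v = 0 := by
    intro v
    rw [← h1.dotProduct_mulVec_zero_iff]
    have a := h1.dotProduct_mulVec_nonneg v
    have b := h2.dotProduct_mulVec_nonneg v
    rw [neg_mulVec, dotProduct_neg, neg_nonneg] at b
    exact le_antisymm b a
  ext i j
  have := congrFun (hv (Pi.single j 1)) i
  simpa [Matrix.mulVec_single] using this

lemma sum_star_mul (E F : Matrix ι ι ℂ) :
    ∑ q : ι × ι, star (E q.1 q.2) * F q.1 q.2 = Matrix.trace (Eᴴ * F) := by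
  rw [Matrix.trace, Fintype.sum_prod_type]
  simp only [Matrix.diag, Matrix.mul_apply, Matrix.conjTranspose_apply]
  rw [Finset.sum_comm]

lemma trace_conj_self (N : Matrix ι ι ℂ) :
    Matrix.trace (Nᴴ * N) = ((∑ q : ι × ι, Complex.normSq (N q.1 q.2) : ℝ) : ℂ) := by
  rw [← sum_star_mul]
  push_cast
  refine Finset.sum_congr rfl fun q _ => ?_
  rw [Complex.normSq_eq_conj_mul_self, Complex.star_def]

lemma trace_conj_self_nonneg (N : Matrix ι ι ℂ) :
    ∃ r : ℝ, 0 ≤ r ∧ Matrix.trace (Nᴴ * N) = (r : ℂ) :=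
  ⟨_, Finset.sum_nonneg fun q _ => Complex.normSq_nonneg _, trace_conj_self N⟩

lemma trace_conj_self_pos {N : Matrix ι ι ℂ} (hN : N ≠ 0) :
    ∃ r : ℝ, 0 < r ∧ Matrix.trace (Nᴴ * N) = (r : ℂ) := by
  refine ⟨_, ?_, trace_conj_self N⟩
  obtain ⟨i, j, hij⟩ : ∃ i j, N i j ≠ 0 := by
    by_contra hc
    push_neg at hc
    exact hN (Matrix.ext hc)
  refine Finset.sum_pos' (fun q _ => Complex.normSq_nonneg _) ⟨(i, j), Finset.mem_univ _, ?_⟩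
  simpa [Complex.normSq_pos] using hij

/-- Projections in a measurement are mutually orthogonal. -/
lemma orth {κ : Type*} [Fintype κ] [DecidableEq κ] {A : κ → Matrix ι ι ℂ}
    (hA : IsMeasurement A) (hproj : ∀ x, (A x).IsHermitian ∧ A x * A x = A x)
    {x x' : κ} (hne : x ≠ x') : A x * A x' = 0 := by
  have hS : (∑ z ∈ Finset.univ \ {x, x'}, A z).PosSemidef :=
    Finset.sum_induction _ _ (fun a b ha hb => ha.add hb) .zero (fun z _ => hA.1 z)
  have hsum : ∑ z ∈ Finset.univ \ {x, x'}, A z = 1 - A x - A x' := by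
    have h1 : ∑ z ∈ ({x, x'} : Finset κ), A z = A x + A x' := Finset.sum_pair hne
    have h2 : ∑ z ∈ Finset.univ \ {x, x'}, A z
        = (∑ z, A z) - ∑ z ∈ ({x, x'} : Finset κ), A z :=
      Finset.sum_sdiff_eq_sub (Finset.subset_univ _)
    rw [h2, h1, hA.2, sub_sub]
  rw [hsum] at hS
  have hM : ((A x')ᴴ * (1 - A x - A x') * (A x')).PosSemidef :=
    hS.conjTranspose_mul_mul_same _
  have hcalc : (A x')ᴴ * (1 - A x - A x') * (A x')
      = -((A x * A x')ᴴ * (A x * A x')) := by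
    have e1 := (hproj x').2
    have e2 : A x * (A x * A x') = A x * A x' := by rw [← Matrix.mul_assoc, (hproj x).2]
    rw [Matrix.conjTranspose_mul, (hproj x).1.eq, (hproj x').1.eq]
    simp only [Matrix.mul_sub, Matrix.sub_mul, Matrix.mul_one, Matrix.one_mul,
      Matrix.mul_assoc, e1, e2]
    abel
  rw [hcalc] at hM
  have hzero : (A x * A x')ᴴ * (A x * A x') = 0 :=
    psd_eq_zero_of_neg (Matrix.posSemidef_conjTranspose_mul_self _) (by simpa using hM)
  exact Matrix.conjTranspose_mul_self_eq_zero.mp hzero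

/-- Contraction of the Fisher matrix against a matrix `M`. -/
lemma fisher_contract {κ : Type*} [Fintype κ] (C : κ → Matrix ι ι ℂ)
    (M : Matrix ι ι ℂ) (p : ι × ι) :
    ∑ q : ι × ι, Fisher C p q * M q.1 q.2
      = ∑ x, (Matrix.trace (C x))⁻¹ * Matrix.trace ((C x)ᴴ * M) * C x p.1 p.2 := by
  simp only [Fisher, Matrix.sum_apply, Matrix.smul_apply, outerProd, Matrix.of_apply,
    smul_eq_mul, Finset.sum_mul]
  rw [Finset.sum_comm]
  refine Finset.sum_congr rfl fun x _ => ?_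
  rw [← sum_star_mul, Finset.mul_sum, Finset.sum_mul]
  refine Finset.sum_congr rfl fun q _ => ?_
  ring

/-- The key step: if `Fisher A = Fisher B` for sharp measurements, then `B` is a
post-processing of `A`. -/
lemma postproc_of_fisher_eq {d n m : ℕ}
    (A : Fin n → Matrix (Fin d) (Fin d) ℂ) (B : Fin m → Matrix (Fin d) (Fin d) ℂ)
    (hA : IsMeasurement A) (hB : IsMeasurement B)
    (hA0 : ∀ x, A x ≠ 0) (hB0 : ∀ y, B y ≠ 0)
    (hprojA : ∀ x, (A x).IsHermitian ∧ A x * A x = A x)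
    (hprojB : ∀ y, (B y).IsHermitian ∧ B y * B y = B y)
    (h : Fisher A = Fisher B) : PostProc B A := by
  -- traces of the effects are positive reals
  have htrA : ∀ x, ∃ t : ℝ, 0 < t ∧ Matrix.trace (A x) = (t : ℂ) := by
    intro x
    obtain ⟨t, ht, htr⟩ := trace_conj_self_pos (hA0 x)
    refine ⟨t, ht, ?_⟩
    rw [← htr, (hprojA x).1.eq]
    conv_lhs => rw [← (hprojA x).2]
  have htrB : ∀ y, ∃ t : ℝ, 0 < t ∧ Matrix.trace (B y) = (t : ℂ) := by
    intro y
    obtain ⟨t, ht, htr⟩ := trace_conj_self_pos (hB0 y)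
    refine ⟨t, ht, ?_⟩
    rw [← htr, (hprojB y).1.eq]
    conv_lhs => rw [← (hprojB y).2]
  -- each trace (A x ᴴ * B y) is a nonnegative real
  have hcross : ∀ x y, ∃ r : ℝ, 0 ≤ r ∧ Matrix.trace ((A x)ᴴ * B y) = (r : ℂ) := by
    intro x y
    obtain ⟨r, hr, htr⟩ := trace_conj_self_nonneg (B y * A x)
    refine ⟨r, hr, ?_⟩
    have hct : (B y * A x)ᴴ * (B y * A x) = A x * (B y * (B y * A x)) := by
      rw [Matrix.conjTranspose_mul, (hprojA x).1.eq, (hprojB y).1.eq]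
      simp only [Matrix.mul_assoc]
    have e : B y * (B y * A x) = B y * A x := by rw [← Matrix.mul_assoc, (hprojB y).2]
    rw [← htr, hct, e, (hprojA x).1.eq, ← Matrix.mul_assoc,
      Matrix.trace_mul_comm (A x * B y) (A x), ← Matrix.mul_assoc, (hprojA x).2]
  -- from the Fisher equality: B y = ∑ x, c x y • A x
  have hexp : ∀ y, B y = ∑ x, ((Matrix.trace (A x))⁻¹ * Matrix.trace ((A x)ᴴ * B y)) • A x := by
    intro y
    ext i j
    have key : ∑ q : Fin d × Fin d, Fisher A (i, j) q * B y q.1 q.2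
        = ∑ q : Fin d × Fin d, Fisher B (i, j) q * B y q.1 q.2 := by rw [h]
    rw [fisher_contract, fisher_contract] at key
    have hBside : ∑ y', (Matrix.trace (B y'))⁻¹ * Matrix.trace ((B y')ᴴ * B y) * B y' (i, j).1 (i, j).2
        = B y i j := by
      rw [Finset.sum_eq_single y]
      · obtain ⟨t, ht, htr⟩ := htrB y
        rw [(hprojB y).1.eq, (hprojB y).2, htr]
        rw [inv_mul_cancel₀ (by exact_mod_cast ht.ne')]
        simp
      · intro y' _ hne
        rw [(hprojB y').1.eq, orth hB hprojB hne]
        simp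
      · simp
    rw [hBside] at key
    rw [Matrix.sum_apply]
    simp only [Matrix.smul_apply, smul_eq_mul]
    exact key.symm
  -- the coefficients, as real numbers
  have hcoef : ∀ x y, ∃ c : ℝ, 0 ≤ c ∧
      (Matrix.trace (A x))⁻¹ * Matrix.trace ((A x)ᴴ * B y) = (c : ℂ) := by
    intro x y
    obtain ⟨t, ht, htr⟩ := htrA x
    obtain ⟨r, hr, hrr⟩ := hcross x y
    refine ⟨t⁻¹ * r, mul_nonneg (inv_nonneg.mpr ht.le) hr, ?_⟩
    rw [htr, hrr]
    push_cast
    rfl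
  choose c hc0 hcval using hcoef
  refine ⟨fun y x => c x y, fun y x => hc0 x y, ?_, ?_⟩
  · -- column sums equal 1
    intro x
    obtain ⟨t, ht, htr⟩ := htrA x
    have hsum : ∑ y, ((c x y : ℝ) : ℂ) = 1 := by
      have : ∑ y, (Matrix.trace (A x))⁻¹ * Matrix.trace ((A x)ᴴ * B y) = 1 := by
        rw [← Finset.mul_sum, ← Matrix.trace_sum]
        have : ∑ y, (A x)ᴴ * B y = (A x)ᴴ * ∑ y, B y := by rw [Finset.mul_sum]
        rw [this, hB.2, Matrix.mul_one, (hprojA x).1.eq, htr,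
          inv_mul_cancel₀ (by exact_mod_cast ht.ne')]
      rw [← this]
      exact Finset.sum_congr rfl fun y _ => (hcval x y).symm
    have := hsum
    rw [← Complex.ofReal_sum] at this
    exact_mod_cast this
  · intro y
    rw [hexp y]
    refine Finset.sum_congr rfl fun x _ => ?_
    rw [← hcval x y]

end Stmt11Aux

/-- The Fisher information map is injective on sharp measurements, up to
post-processing equivalence. -/
theorem stmt11 {d n m : ℕ}
    (A : Fin n → Matrix (Fin d) (Fin d) ℂ) (B : Fin m → Matrix (Fin d) (Fin d) ℂ)
    (hA : IsMeasurement A) (hB : IsMeasurement B)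
    (hA0 : ∀ x, A x ≠ 0) (hB0 : ∀ y, B y ≠ 0)
    (hprojA : ∀ x, (A x).IsHermitian ∧ A x * A x = A x)
    (hprojB : ∀ y, (B y).IsHermitian ∧ B y * B y = B y)
    (h : Fisher A = Fisher B) :
    PostProc A B ∧ PostProc B A := by
  exact ⟨Stmt11Aux.postproc_of_fisher_eq B A hB hA hB0 hA0 hprojB hprojA h.symm,
    Stmt11Aux.postproc_of_fisher_eq A B hA hB hA0 hB0 hprojA hprojB h⟩
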